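/- Let β > 1, C ≥ 0, M > 0, and let μ be a finite nonnegative measure on ℝ supported in [0,M], with decomposition μ = ν + Σ_i m_i δ_{α_i} into its continuous part ν and its atoms m_i > 0 at distinct points α_i. Suppose that |∫ y ψ(y) dμ(y)| ≤ C · Σ_i m_i^β |ψ(α_i)| for every bounded continuous ψ : ℝ → ℝ. If (a,b) is an open interval with 0 ∉ (a,b) that contains none of the points α_i, then μ((a,b)) = 0. -/
import Mathlib


open MeasureTheory

/-- Lemma 3.7: let `μ = ν + Σ_i m_i δ_{α_i}` be a finite nonnegative measure
supported in `[0,M]`, with continuous part `ν` and atoms `m_i > 0` at the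
distinct points of the countable set `A`. Assume
`|∫ y ψ(y) dμ| ≤ C Σ_i m_i^β |ψ(α_i)|` for every bounded continuous `ψ`.
If `(a,b)` is an open interval avoiding `0` and containing no atom, then
`μ((a,b)) = 0`. -/
theorem stmt_15 (β C M : ℝ) (hβ : 1 < β) (hC : 0 ≤ C) (hM : 0 < M)
    (μ : Measure ℝ) (hfin : IsFiniteMeasure μ)
    (hsupp : μ (Set.Icc (0 : ℝ) M)ᶜ = 0)
    (ν : Measure ℝ) (A : Set ℝ) (m : ℝ → ℝ)
    (hA : A.Countable)
    (hν : ∀ x : ℝ, ν {x} = 0)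
    (hm : ∀ α ∈ A, 0 < m α)
    (hdecomp : μ = ν + Measure.sum (fun α : A => ENNReal.ofReal (m α) • Measure.dirac (α : ℝ)))
    (hineq : ∀ ψ : ℝ → ℝ, Continuous ψ → (∃ B, ∀ y, |ψ y| ≤ B) →
      |∫ y, y * ψ y ∂μ| ≤ C * ∑' α : A, m α ^ β * |ψ (α : ℝ)|) :
    ∀ a b : ℝ, (0 : ℝ) ∉ Set.Ioo a b → A ∩ Set.Ioo a b = ∅ →
      μ (Set.Ioo a b) = 0 := by
  haveI := hfin
  intro a b h0 hAab
  rcases le_or_gt b a with hba | hab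
  · rw [Set.Ioo_eq_empty (not_lt.2 hba)]
    exact measure_empty
  rcases le_or_gt b 0 with hb0 | hb0
  · -- the interval lies in the negatives, where μ vanishes
    refine measure_mono_null (fun x hx => ?_) hsupp
    intro hx'
    have := hx'.1
    have := hx.2
    linarith
  have ha0 : 0 ≤ a := by
    by_contra h
    exact h0 ⟨lt_of_not_ge h, hb0⟩
  -- key step: every compact subinterval has measure zero
  have key : ∀ ε : ℝ, 0 < ε → μ (Set.Icc (a + ε) (b - ε)) = 0 := by
    intro ε hε
    set ψ : ℝ → ℝ := fun x => max 0 (min 1 (min ((x - a) / ε) ((b - x) / ε))) with hψdef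
    have hcont : Continuous ψ := by
      apply Continuous.max continuous_const
      apply Continuous.min continuous_const
      exact ((continuous_id.sub continuous_const).div_const _).min
        ((continuous_const.sub continuous_id).div_const _)
    have hψ0 : ∀ x, 0 ≤ ψ x := fun x => le_max_left _ _
    have hψ1 : ∀ x, ψ x ≤ 1 := fun x => max_le zero_le_one (min_le_left _ _)
    have hzero : ∀ x, x ∉ Set.Ioo a b → ψ x = 0 := by
      intro x hx
      rcases not_and_or.1 hx with hx1 | hx2
      · have hx1' : x ≤ a := not_lt.1 hx1
        have : (x - a) / ε ≤ 0 := div_nonpos_of_nonpos_of_nonneg (by linarith) hε.le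
        have h2 : min 1 (min ((x - a) / ε) ((b - x) / ε)) ≤ 0 :=
          le_trans (min_le_right _ _) (le_trans (min_le_left _ _) this)
        exact max_eq_left h2
      · have hx2' : b ≤ x := not_lt.1 hx2
        have : (b - x) / ε ≤ 0 := div_nonpos_of_nonpos_of_nonneg (by linarith) hε.le
        have h2 : min 1 (min ((x - a) / ε) ((b - x) / ε)) ≤ 0 :=
          le_trans (min_le_right _ _) (le_trans (min_le_right _ _) this)
        exact max_eq_left h2
    have hone : ∀ x ∈ Set.Icc (a + ε) (b - ε), ψ x = 1 := by
      intro x hx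
      have h1 : (1 : ℝ) ≤ (x - a) / ε := (le_div_iff₀ hε).2 (by linarith [hx.1])
      have h2 : (1 : ℝ) ≤ (b - x) / ε := (le_div_iff₀ hε).2 (by linarith [hx.2])
      have : min 1 (min ((x - a) / ε) ((b - x) / ε)) = 1 :=
        min_eq_left (le_min h1 h2)
      rw [hψdef]
      simp only [this]
      exact max_eq_right zero_le_one
    -- the right-hand side of the inequality vanishes
    have hrhs : (∑' α : A, m α ^ β * |ψ (α : ℝ)|) = 0 := by
      refine (tsum_congr fun α => ?_).trans tsum_zero
      have hαnot : (α : ℝ) ∉ Set.Ioo a b := by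
        intro hmem
        have : (α : ℝ) ∈ A ∩ Set.Ioo a b := ⟨α.2, hmem⟩
        rw [hAab] at this
        exact this
      rw [hzero _ hαnot]
      simp
    have hint0 : |∫ y, y * ψ y ∂μ| ≤ 0 := by
      have := hineq ψ hcont ⟨1, fun y => abs_le.2 ⟨by linarith [hψ0 y], hψ1 y⟩⟩
      rw [hrhs, mul_zero] at this
      exact this
    have hint : ∫ y, y * ψ y ∂μ = 0 := abs_eq_zero.1 (le_antisymm hint0 (abs_nonneg _))
    -- integrability
    have hf_cont : Continuous (fun y => y * ψ y) := continuous_id.mul hcont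
    have hf_cs : HasCompactSupport (fun y => y * ψ y) := by
      refine HasCompactSupport.intro (isCompact_Icc (a := a) (b := b)) fun x hx => ?_
      have : x ∉ Set.Ioo a b := fun h => hx ⟨h.1.le, h.2.le⟩
      rw [hzero _ this, mul_zero]
    have hf_int : Integrable (fun y => y * ψ y) μ :=
      hf_cont.integrable_of_hasCompactSupport hf_cs
    have hf_nonneg : ∀ y, 0 ≤ y * ψ y := by
      intro y
      by_cases hy : y ∈ Set.Ioo a b
      · exact mul_nonneg (le_of_lt (lt_of_le_of_lt ha0 hy.1)) (hψ0 y)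
      · rw [hzero _ hy, mul_zero]
    have hae : (fun y => y * ψ y) =ᵐ[μ] 0 :=
      (integral_eq_zero_iff_of_nonneg hf_nonneg hf_int).1 hint
    have hmz : μ {y | y * ψ y ≠ 0} = 0 := by
      have := hae
      rw [Filter.EventuallyEq, ae_iff] at this
      simpa using this
    refine measure_mono_null (fun x hx => ?_) hmz
    have hψx := hone x hx
    have hxpos : 0 < x := lt_of_lt_of_le (by linarith) hx.1
    show x * ψ x ≠ 0
    rw [hψx, mul_one]
    exact ne_of_gt hxpos
  -- cover the open interval by compact subintervals
  have hsub : Set.Ioo a b ⊆ ⋃ n : ℕ, Set.Icc (a + 1 / (n + 1)) (b - 1 / (n + 1)) := by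
    intro x hx
    obtain ⟨n, hn⟩ := exists_nat_one_div_lt
      (lt_min (sub_pos.2 hx.1) (sub_pos.2 hx.2))
    refine Set.mem_iUnion.2 ⟨n, ?_, ?_⟩
    · have := lt_of_lt_of_le hn (min_le_left _ _)
      linarith
    · have := lt_of_lt_of_le hn (min_le_right _ _)
      linarith
  refine measure_mono_null hsub (measure_iUnion_null fun n => key _ (by positivity))
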